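/- Let λ = (λ_1,…,λ_n) ∈ ℂ^n. (1) If a vector ξ ∈ H_n satisfies T_i^* ξ = conj(λ_i)·ξ for all 1 ≤ i ≤ n, then ⟨ξ, ξ_w⟩ = ⟨ξ, ξ_e⟩ · conj(w(λ)) · W(e,w)^{-1} for every word w. (2) Conversely, if ξ ∈ H_n satisfies ⟨ξ, ξ_w⟩ = conj(w(λ)) · W(e,w)^{-1} for every word w (so ⟨ξ, ξ_e⟩ = 1), then T_i^* ξ = conj(λ_i)·ξ for all 1 ≤ i ≤ n. (3) Consequently, for every λ ∈ ℂ^n the joint eigenspace {ξ ∈ H_n : T_i^* ξ = conj(λ_i)·ξ for all i} has dimension at most one. -/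

import Mathlib

noncomputable section

/-- Auxiliary recursion for the weight function: `W(u, []) = 1` and, reading the word
`w = i_k ⋯ i_1` as the list `[i_k, …, i_1]`,
`W(u, i :: w) = λ_{i, w·u} · W(u, w)`, so that
`W(u, i_k⋯i_1) = λ_{i_1,u} · λ_{i_2, i_1 u} ⋯ λ_{i_k, i_{k-1}⋯i_1 u}`. -/
def Waux {n : ℕ} (lam : Fin n → FreeMonoid (Fin n) → ℝ) (u : FreeMonoid (Fin n)) :
    List (Fin n) → ℝ
  | [] => 1
  | i :: w => lam i (FreeMonoid.ofList w * u) * Waux lam u w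

/-- The weight function `W : F_n^+ × F_n^+ → ℝ` associated to the weights `λ_{i,w}`. -/
def Wfun {n : ℕ} (lam : Fin n → FreeMonoid (Fin n) → ℝ) (u w : FreeMonoid (Fin n)) : ℝ :=
  Waux lam u (FreeMonoid.toList w)

instance {n : ℕ} : DecidableEq (FreeMonoid (Fin n)) := Classical.decEq _

/-- `n`-variable Fock space `H_n = ℓ²(F_n^+)`. -/
abbrev Hn (n : ℕ) : Type := lp (fun _ : FreeMonoid (Fin n) => ℂ) 2

/-- The standard orthonormal basis vector `ξ_w` of `H_n`. -/
def xi {n : ℕ} (w : FreeMonoid (Fin n)) : Hn n := lp.single 2 w 1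

/-- `w(λ) = λ_{i_1} ⋯ λ_{i_k}` for a word `w = i_1 ⋯ i_k`, with `e(λ) = 1`. -/
def wl {n : ℕ} (l : Fin n → ℂ) (w : FreeMonoid (Fin n)) : ℂ :=
  ((FreeMonoid.toList w).map l).prod

lemma Waux_pos {n : ℕ} (lam : Fin n → FreeMonoid (Fin n) → ℝ)
    (hpos : ∀ i w, 0 < lam i w) (u : FreeMonoid (Fin n)) :
    ∀ L : List (Fin n), 0 < Waux lam u L
  | [] => one_pos
  | i :: L => mul_pos (hpos _ _) (Waux_pos lam hpos u L)

lemma coe_eq_inner {n : ℕ} (x : Hn n) (w : FreeMonoid (Fin n)) :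
    x w = @inner ℂ _ _ (xi w) x := by
  rw [xi, lp.inner_single_left]; simp

/-- (1) any joint eigenvector `ξ` for `(T_1^*, …, T_n^*)` with eigenvalue
`conj(λ)` has coefficients `⟨ξ, ξ_w⟩ = ⟨ξ, ξ_e⟩ · conj(w(λ)) · W(e,w)⁻¹`; (2) conversely
a vector with the normalized coefficients `conj(w(λ)) · W(e,w)⁻¹` is such a joint
eigenvector; (3) consequently every joint eigenspace is at most one-dimensional.
(Here `⟪ξ_w, ξ⟫` is the coefficient of `ξ` at `ξ_w`, i.e. the pairing `⟨ξ, ξ_w⟩`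
of the paper.) -/
theorem eigenvector_formula (n : ℕ) (hn : 2 ≤ n)
    (lam : Fin n → FreeMonoid (Fin n) → ℝ)
    (hpos : ∀ i w, 0 < lam i w) (hbdd : ∃ C : ℝ, ∀ i w, lam i w ≤ C)
    (T : Fin n → (Hn n →L[ℂ] Hn n))
    (hT : ∀ i w, T i (xi w) = (lam i w : ℂ) • xi (FreeMonoid.of i * w))
    (l : Fin n → ℂ) :
    (∀ ξ : Hn n,
        (∀ i, ContinuousLinearMap.adjoint (T i) ξ = (starRingEnd ℂ) (l i) • ξ) →
        ∀ w, @inner ℂ _ _ (xi w) ξ =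
          @inner ℂ _ _ (xi (1 : FreeMonoid (Fin n))) ξ *
            (starRingEnd ℂ) (wl l w) * ((Wfun lam 1 w : ℂ))⁻¹) ∧
      (∀ ξ : Hn n,
        (∀ w, @inner ℂ _ _ (xi w) ξ = (starRingEnd ℂ) (wl l w) * ((Wfun lam 1 w : ℂ))⁻¹) →
        ∀ i, ContinuousLinearMap.adjoint (T i) ξ = (starRingEnd ℂ) (l i) • ξ) ∧
      Module.rank ℂ
        ↥(⨅ i : Fin n, LinearMap.ker
            ((ContinuousLinearMap.adjoint (T i) -
              (starRingEnd ℂ) (l i) • (1 : Hn n →L[ℂ] Hn n) : Hn n →L[ℂ] Hn n) :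
                Hn n →ₗ[ℂ] Hn n)) ≤ 1 := by
  have hlamC : ∀ i w, (lam i w : ℂ) ≠ 0 := fun i w => by
    exact_mod_cast (hpos i w).ne'
  have hWC : ∀ L : List (Fin n), (Waux lam 1 L : ℂ) ≠ 0 := fun L => by
    exact_mod_cast (Waux_pos lam hpos 1 L).ne'
  -- key recursion
  have key : ∀ ξ : Hn n,
      (∀ i, ContinuousLinearMap.adjoint (T i) ξ = (starRingEnd ℂ) (l i) • ξ) →
      ∀ (i : Fin n) (w : FreeMonoid (Fin n)),
      (lam i w : ℂ) * @inner ℂ _ _ (xi (FreeMonoid.of i * w)) ξ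
        = (starRingEnd ℂ) (l i) * @inner ℂ _ _ (xi w) ξ := by
    intro ξ hξ i w
    have h1 : @inner ℂ _ _ (xi w) (ContinuousLinearMap.adjoint (T i) ξ)
        = @inner ℂ _ _ (T i (xi w)) ξ :=
      ContinuousLinearMap.adjoint_inner_right _ _ _
    rw [hξ i, inner_smul_right, hT, inner_smul_left, Complex.conj_ofReal] at h1
    exact h1.symm
  have part1 : ∀ ξ : Hn n,
      (∀ i, ContinuousLinearMap.adjoint (T i) ξ = (starRingEnd ℂ) (l i) • ξ) →
      ∀ w, @inner ℂ _ _ (xi w) ξ =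
        @inner ℂ _ _ (xi (1 : FreeMonoid (Fin n))) ξ *
          (starRingEnd ℂ) (wl l w) * ((Wfun lam 1 w : ℂ))⁻¹ := by
    intro ξ hξ w
    have main : ∀ L : List (Fin n),
        @inner ℂ _ _ (xi (FreeMonoid.ofList L)) ξ =
          @inner ℂ _ _ (xi (1 : FreeMonoid (Fin n))) ξ *
            (starRingEnd ℂ) (wl l (FreeMonoid.ofList L)) *
            ((Wfun lam 1 (FreeMonoid.ofList L) : ℂ))⁻¹ := by
      intro L
      induction L with
      | nil => simp [wl, Wfun, Waux]
      | cons i L ih =>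
        have hk := key ξ hξ i (FreeMonoid.ofList L)
        have hxiw : @inner ℂ _ _ (xi (FreeMonoid.ofList (i :: L))) ξ
            = (lam i (FreeMonoid.ofList L) : ℂ)⁻¹ *
              ((starRingEnd ℂ) (l i) * @inner ℂ _ _ (xi (FreeMonoid.ofList L)) ξ) := by
          rw [FreeMonoid.ofList_cons, ← hk, inv_mul_cancel_left₀ (hlamC _ _)]
        rw [hxiw, ih]
        have hwl : wl l (FreeMonoid.ofList (i :: L)) = l i * wl l (FreeMonoid.ofList L) := by
          simp [wl, FreeMonoid.toList_ofList]
        have hW : (Wfun lam 1 (FreeMonoid.ofList (i :: L)) : ℂ)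
            = (lam i (FreeMonoid.ofList L) : ℂ) * (Wfun lam 1 (FreeMonoid.ofList L) : ℂ) := by
          simp [Wfun, FreeMonoid.toList_ofList, Waux, mul_one]
        rw [hwl, hW, map_mul, mul_inv]
        ring
    have := main (FreeMonoid.toList w)
    rwa [FreeMonoid.ofList_toList] at this
  refine ⟨part1, ?_, ?_⟩
  · -- part 2
    intro ξ hξ i
    refine lp.ext (funext fun w => ?_)
    rw [coe_eq_inner, coe_eq_inner ((starRingEnd ℂ) (l i) • ξ) w, inner_smul_right]
    have h1 : @inner ℂ _ _ (xi w) (ContinuousLinearMap.adjoint (T i) ξ)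
        = @inner ℂ _ _ (T i (xi w)) ξ :=
      ContinuousLinearMap.adjoint_inner_right _ _ _
    rw [h1, hT, inner_smul_left, Complex.conj_ofReal, hξ, hξ]
    have hwl : wl l (FreeMonoid.of i * w) = l i * wl l w := by
      simp [wl]
    have hW : (Wfun lam 1 (FreeMonoid.of i * w) : ℂ)
        = (lam i w : ℂ) * (Wfun lam 1 w : ℂ) := by
      have h : Wfun lam 1 (FreeMonoid.of i * w) = lam i w * Wfun lam 1 w := by
        show Waux lam 1 (i :: FreeMonoid.toList w) = _
        simp [Waux, Wfun, FreeMonoid.ofList_toList]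
      rw [h]; push_cast; ring
    rw [hwl, hW, map_mul, mul_inv]
    have hc := hlamC i w
    have hW0 : (Wfun lam 1 w : ℂ) ≠ 0 := hWC (FreeMonoid.toList w)
    field_simp
  · -- part 3
    set E := ⨅ i : Fin n, LinearMap.ker
        ((ContinuousLinearMap.adjoint (T i) -
          (starRingEnd ℂ) (l i) • (1 : Hn n →L[ℂ] Hn n) : Hn n →L[ℂ] Hn n) :
            Hn n →ₗ[ℂ] Hn n) with hE
    have hmem : ∀ ξ : Hn n, ξ ∈ E →
        ∀ i, ContinuousLinearMap.adjoint (T i) ξ = (starRingEnd ℂ) (l i) • ξ := by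
      intro ξ hξ i
      have := (Submodule.mem_iInf _).mp hξ i
      rw [LinearMap.mem_ker] at this
      have h2 : (ContinuousLinearMap.adjoint (T i) - (starRingEnd ℂ) (l i) • 1) ξ = 0 := this
      rw [ContinuousLinearMap.sub_apply, ContinuousLinearMap.smul_apply,
        ContinuousLinearMap.one_apply, sub_eq_zero] at h2
      exact h2
    have hinj : Function.Injective
        (((innerSL ℂ (xi (1 : FreeMonoid (Fin n)))) : Hn n →ₗ[ℂ] ℂ).comp E.subtype) := by
      rw [← LinearMap.ker_eq_bot, Submodule.eq_bot_iff]
      intro x hx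
      rw [LinearMap.mem_ker, LinearMap.comp_apply] at hx
      have hx1 : @inner ℂ _ _ (xi (1 : FreeMonoid (Fin n))) (x : Hn n) = 0 := hx
      have hall : ∀ w, @inner ℂ _ _ (xi w) (x : Hn n) = 0 := by
        intro w
        rw [part1 (x : Hn n) (hmem _ x.2) w, hx1, zero_mul, zero_mul]
      have hx0 : (x : Hn n) = 0 := by
        refine lp.ext (funext fun w => ?_)
        rw [coe_eq_inner, hall w]
        simp
      exact Subtype.ext hx0
    have hrank := LinearMap.rank_le_of_injective _ hinj
    simpa using hrank
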